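/- Let 𝕃 = ℝ[ε] (ε² = 1) be the Lorentz numbers with conjugation a + εb ↦ a − εb, and on 𝕃^{2m} consider the 𝕃-Hermitian form B₊(Z, Z') = conj(Z)ᵗ Z'. Let e = (1−ε)/2 and ē = (1+ε)/2. Then every 𝕃-linear isometry of (𝕃^{2m}, B₊) has the form Â(xe + yē) = (Ax)e + ((Aᵗ)^{-1}y)ē for a unique A ∈ GL(2m, ℝ); in particular the 𝕃-unitary group of B₊ is isomorphic to GL(2m, ℝ). -/

import Mathlib

/-- in the idempotent coordinates `Z = xe + yē` of `𝕃^{2m}`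
(Lorentz numbers `𝕃 = ℝ[ε]`, `ε² = 1`, `e = (1-ε)/2`, `ē = (1+ε)/2`, so that an
`𝕃`-scalar `ae + bē` acts as `(a,b)·(x,y) = (ax, by)` and the `𝕃`-Hermitian
form `B₊(Z,Z') = conj(Z)ᵗZ'` has components `(yᵗx', xᵗy')`), every `𝕃`-linear
isometry `L` of `(𝕃^{2m}, B₊)` has the form
`Â(xe + yē) = (Ax)e + ((Aᵗ)⁻¹y)ē` for a unique `A ∈ GL(2m, ℝ)`. -/
theorem stmt18 (m : ℕ)
    (L : ((Fin (2 * m) → ℝ) × (Fin (2 * m) → ℝ)) →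
      ((Fin (2 * m) → ℝ) × (Fin (2 * m) → ℝ)))
    (hadd : ∀ z z', L (z + z') = L z + L z')
    (hsmul : ∀ (a b : ℝ) z, L (a • z.1, b • z.2) = (a • (L z).1, b • (L z).2))
    (hiso1 : ∀ z z', ∑ i, (L z).2 i * (L z').1 i = ∑ i, z.2 i * z'.1 i)
    (hiso2 : ∀ z z', ∑ i, (L z).1 i * (L z').2 i = ∑ i, z.1 i * z'.2 i) :
    ∃! A : GL (Fin (2 * m)) ℝ, ∀ z,
      L z = ((A : Matrix (Fin (2 * m)) (Fin (2 * m)) ℝ).mulVec z.1,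
        ((A⁻¹ : GL (Fin (2 * m)) ℝ) : Matrix (Fin (2 * m)) (Fin (2 * m)) ℝ).transpose.mulVec z.2) := by
  -- split L into components
  have hsplit : ∀ z, L z = ((L (z.1, 0)).1, (L (0, z.2)).2) := by
    intro z
    have h1 := hsmul 1 0 z
    have h2 := hsmul 0 1 z
    simp only [one_smul, zero_smul] at h1 h2
    ext i
    · rw [h1]
    · rw [h2]
  set f : (Fin (2 * m) → ℝ) →ₗ[ℝ] (Fin (2 * m) → ℝ) :=
    { toFun := fun x => (L (x, 0)).1
      map_add' := by
        intro x x'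
        show (L (x + x', 0)).1 = (L (x, 0)).1 + (L (x', 0)).1
        have : ((x + x' : Fin (2*m) → ℝ), (0 : Fin (2*m) → ℝ)) = (x, 0) + (x', 0) := by
          ext i <;> simp
        rw [this, hadd]; rfl
      map_smul' := by
        intro a x
        have := hsmul a 0 (x, 0)
        simp only [zero_smul] at this
        simpa using congrArg Prod.fst this } with hf
  set g : (Fin (2 * m) → ℝ) →ₗ[ℝ] (Fin (2 * m) → ℝ) :=
    { toFun := fun y => (L (0, y)).2
      map_add' := by
        intro y y'
        show (L (0, y + y')).2 = (L (0, y)).2 + (L (0, y')).2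
        have : ((0 : Fin (2*m) → ℝ), (y + y' : Fin (2*m) → ℝ)) = (0, y) + (0, y') := by
          ext i <;> simp
        rw [this, hadd]; rfl
      map_smul' := by
        intro a y
        have := hsmul 0 a (0, y)
        simp only [zero_smul] at this
        simpa using congrArg Prod.snd this } with hg
  have hkey : ∀ x y, ∑ i, g y i * f x i = ∑ i, y i * x i := by
    intro x y
    have := hiso1 (0, y) (x, 0)
    simp at this; exact this
  set F := LinearMap.toMatrix' f with hF
  set G := LinearMap.toMatrix' g with hG
  have hfm : ∀ x, f x = F.mulVec x := by
    intro x
    rw [hF, ← Matrix.toLin'_apply, Matrix.toLin'_toMatrix']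
  have hgm : ∀ y, g y = G.mulVec y := by
    intro y
    rw [hG, ← Matrix.toLin'_apply, Matrix.toLin'_toMatrix']
  have hGF : G.transpose * F = 1 := by
    ext j k
    have hjk := hkey (fun j' => if j' = k then (1:ℝ) else 0) (fun j' => if j' = j then (1:ℝ) else 0)
    simp only [Matrix.mul_apply, Matrix.transpose_apply, Matrix.one_apply]
    calc ∑ i, G i j * F i k
        = ∑ i, g (fun j' => if j' = j then (1:ℝ) else 0) i * f (fun j' => if j' = k then (1:ℝ) else 0) i := by
          apply Finset.sum_congr rfl
          intro i _
          rw [hF, hG, LinearMap.toMatrix'_apply, LinearMap.toMatrix'_apply]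
          have hs : ∀ j : Fin (2*m), (Pi.single j (1:ℝ) : Fin (2*m) → ℝ) = fun j' => if j' = j then 1 else 0 :=
            fun j => funext fun j' => by simp [Pi.single_apply]
          rw [hs, hs]
      _ = ∑ i, (if i = j then (1:ℝ) else 0) * (if i = k then (1:ℝ) else 0) := hjk
      _ = if j = k then 1 else 0 := by
          simp [ite_and, Finset.sum_ite_eq', eq_comm]
  have hFG : F * G.transpose = 1 := mul_eq_one_comm.mpr hGF
  refine ⟨⟨F, G.transpose, hFG, hGF⟩, ?_, ?_⟩
  · intro z
    rw [hsplit z]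
    have e1 : (L (z.1, 0)).1 = F.mulVec z.1 := hfm z.1
    have e2 : (L (0, z.2)).2 = G.transpose.transpose.mulVec z.2 := by
      rw [Matrix.transpose_transpose]; exact hgm z.2
    exact Prod.ext e1 e2
  · intro B hB
    apply Units.ext
    show (B : Matrix (Fin (2*m)) (Fin (2*m)) ℝ) = F
    apply Matrix.toLin'.injective
    apply LinearMap.ext
    intro x
    rw [Matrix.toLin'_apply, Matrix.toLin'_apply]
    have h1 : (L (x, 0)).1 = (B : Matrix (Fin (2*m)) (Fin (2*m)) ℝ).mulVec x :=
      congrArg Prod.fst (hB (x, 0))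
    rw [← h1]
    exact hfm x
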